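/- For n ≥ 3, Aut(F_n) contains a symmetric group Σ ≅ S_{n+1} that intersects W_n in the visible copy of S_n: there exists an injective group homomorphism ψ : S_{n+1} → Aut(F_n) such that the intersection of the image of ψ with the subgroup W_n equals the subgroup of basis-permutation automorphisms S_n ⊂ Aut(F_n). -/

import Mathlib

/-- The homomorphism `S_n → Aut(F_n)` sending a permutation of the index set to the
corresponding basis-permutation automorphism of the free group. -/
def permToAut (n : ℕ) : Equiv.Perm (Fin n) →* MulAut (FreeGroup (Fin n)) where
  toFun σ := FreeGroup.freeGroupCongr σ
  map_one' := by ext x; simp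
  map_mul' σ τ := by ext x; simp [FreeGroup.freeGroupCongr, ← FreeGroup.map.comp]

/-- The automorphism `ε_i ∈ Aut(F_n)` sending `a_i` to `a_i⁻¹` and fixing the other
generators. -/
def epsilonAut {n : ℕ} (i : Fin n) : MulAut (FreeGroup (Fin n)) :=
  MonoidHom.toMulEquiv
    (FreeGroup.lift fun k => if k = i then (FreeGroup.of k)⁻¹ else FreeGroup.of k)
    (FreeGroup.lift fun k => if k = i then (FreeGroup.of k)⁻¹ else FreeGroup.of k)
    (by ext k; by_cases hk : k = i <;> simp [hk])
    (by ext k; by_cases hk : k = i <;> simp [hk])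

/-- The subgroup `W_n ⊆ Aut(F_n)` generated by the involutions `ε_1, …, ε_n` together with
the basis-permutation automorphisms; it is isomorphic to `(ℤ/2)^n ⋊ S_n`. -/
def Wsubgroup (n : ℕ) : Subgroup (MulAut (FreeGroup (Fin n))) :=
  Subgroup.closure (Set.range (epsilonAut (n := n)) ∪ Set.range (permToAut n))

namespace AuxSymmSucc

open FreeGroup

variable {n : ℕ}

/-- Exponent-sum homomorphism. -/
def expSum : FreeGroup (Fin n) →* Multiplicative ℤ :=
  FreeGroup.lift fun _ => Multiplicative.ofAdd 1

@[simp] lemma expSum_of (i : Fin n) : expSum (of i) = Multiplicative.ofAdd 1 := by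
  simp [expSum]

lemma of_ne_inv_of (i j : Fin n) : of i ≠ (of j)⁻¹ := by
  intro h
  have := congrArg expSum h
  simp only [map_inv, expSum_of] at this
  have := congrArg Multiplicative.toAdd this
  simp at this

lemma of_ne_one (i : Fin n) : of i ≠ (1 : FreeGroup (Fin n)) := by
  intro h
  have := congrArg expSum h
  simp only [map_one, expSum_of] at this
  have := congrArg Multiplicative.toAdd this
  simp at this

lemma mul_inv_ne (k j m : Fin n) (hkj : k ≠ j) :
    of k * (of j)⁻¹ ≠ of m ∧ of k * (of j)⁻¹ ≠ (of m)⁻¹ := by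
  constructor <;> intro h <;>
  · have := congrArg expSum h
    simp only [_root_.map_mul, map_inv, expSum_of] at this
    have := congrArg Multiplicative.toAdd this
    simp at this

/-- The generator `a_j` for `j < n`, and `1` for `j = n`. -/
def gen (j : Fin (n + 1)) : FreeGroup (Fin n) :=
  if h : j = Fin.last n then 1 else of (j.castPred h)

@[simp] lemma gen_last : gen (Fin.last n) = 1 := by simp [gen]

@[simp] lemma gen_castSucc (i : Fin n) : gen i.castSucc = of i := by
  simp [gen, (Fin.castSucc_lt_last i).ne]

def phi (σ : Equiv.Perm (Fin (n + 1))) : FreeGroup (Fin n) →* FreeGroup (Fin n) :=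
  FreeGroup.lift fun i => gen (σ i.castSucc) * (gen (σ (Fin.last n)))⁻¹

@[simp] lemma phi_of (σ : Equiv.Perm (Fin (n + 1))) (i : Fin n) :
    phi σ (of i) = gen (σ i.castSucc) * (gen (σ (Fin.last n)))⁻¹ := by
  simp [phi]

lemma phi_gen (σ : Equiv.Perm (Fin (n + 1))) (j : Fin (n + 1)) :
    phi σ (gen j) = gen (σ j) * (gen (σ (Fin.last n)))⁻¹ := by
  by_cases h : j = Fin.last n
  · subst h; simp
  · obtain ⟨i, rfl⟩ : ∃ i : Fin n, j = i.castSucc :=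
      ⟨j.castPred h, (Fin.castSucc_castPred j h).symm⟩
    simp

lemma phi_comp (σ τ : Equiv.Perm (Fin (n + 1))) :
    (phi σ).comp (phi τ) = phi (σ * τ) := by
  apply FreeGroup.ext_hom
  intro i
  rw [MonoidHom.comp_apply, phi_of, phi_of, _root_.map_mul, _root_.map_inv, phi_gen, phi_gen,
    Equiv.Perm.mul_apply, Equiv.Perm.mul_apply]
  group

lemma phi_one : phi (1 : Equiv.Perm (Fin (n + 1))) = MonoidHom.id _ := by
  apply FreeGroup.ext_hom
  intro i
  simp

/-- `ψ` as a raw map to `MulAut`. -/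
def psi0 (σ : Equiv.Perm (Fin (n + 1))) : MulAut (FreeGroup (Fin n)) :=
  MonoidHom.toMulEquiv (phi σ) (phi σ⁻¹)
    (by rw [phi_comp, inv_mul_cancel, phi_one])
    (by rw [phi_comp, mul_inv_cancel, phi_one])

@[simp] lemma psi0_apply (σ : Equiv.Perm (Fin (n + 1))) (x : FreeGroup (Fin n)) :
    psi0 σ x = phi σ x := rfl

lemma mulAut_ext {f g : MulAut (FreeGroup (Fin n))}
    (h : ∀ i, f (of i) = g (of i)) : f = g := by
  have : (f : FreeGroup (Fin n) →* FreeGroup (Fin n)) = g := FreeGroup.ext_hom _ _ h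
  exact MulEquiv.toMonoidHom_injective this

/-- The homomorphism `S_{n+1} → Aut(F_n)`. -/
def psi : Equiv.Perm (Fin (n + 1)) →* MulAut (FreeGroup (Fin n)) where
  toFun := psi0
  map_one' := mulAut_ext (by intro i; simp)
  map_mul' σ τ := mulAut_ext (by
    intro i
    have := congrArg (fun (f : FreeGroup (Fin n) →* FreeGroup (Fin n)) => f (of i))
      (phi_comp σ τ)
    simpa using this.symm)

/-- The subgroup of signed-permutation automorphisms. -/
def SP : Subgroup (MulAut (FreeGroup (Fin n))) where
  carrier := {f | ∀ i, ∃ j, f (of i) = of j ∨ f (of i) = (of j)⁻¹}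
  one_mem' := fun i => ⟨i, Or.inl rfl⟩
  mul_mem' := by
    rintro f g hf hg i
    obtain ⟨j, hj | hj⟩ := hg i <;> obtain ⟨k, hk | hk⟩ := hf j
    · exact ⟨k, Or.inl (by simp [MulAut.mul_apply, hj, hk])⟩
    · exact ⟨k, Or.inr (by simp [MulAut.mul_apply, hj, hk])⟩
    · exact ⟨k, Or.inr (by simp [MulAut.mul_apply, hj, map_inv, hk])⟩
    · exact ⟨k, Or.inl (by simp [MulAut.mul_apply, hj, map_inv, hk])⟩
  inv_mem' := by
    intro f hf
    -- the underlying permutation of indices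
    choose p hp using hf
    have hpinj : Function.Injective p := by
      intro i₁ i₂ h
      rcases hp i₁ with h1 | h1 <;> rcases hp i₂ with h2 | h2
      · have : f (of i₁) = f (of i₂) := by rw [h1, h2, h]
        exact FreeGroup.of_injective (f.injective this)
      · have : f (of i₁) = f ((of i₂)⁻¹) := by
          rw [_root_.map_inv, h1, h2, h, inv_inv]
        exact absurd (f.injective this) (of_ne_inv_of _ _)
      · have : f (of i₂) = f ((of i₁)⁻¹) := by
          rw [_root_.map_inv, h2, h1, h, inv_inv]
        exact absurd (f.injective this) (of_ne_inv_of _ _)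
      · have : f (of i₁) = f (of i₂) := by rw [h1, h2, h]
        exact FreeGroup.of_injective (f.injective this)
    have hpsurj : Function.Surjective p := Finite.surjective_of_injective hpinj
    intro i
    obtain ⟨j, rfl⟩ := hpsurj i
    rcases hp j with h1 | h1
    · exact ⟨j, Or.inl (by rw [← h1, MulAut.inv_def]; exact f.symm_apply_apply _)⟩
    · refine ⟨j, Or.inr ?_⟩
      have h2 : f ((of j)⁻¹) = of (p j) := by rw [_root_.map_inv, h1, inv_inv]
      rw [← h2, MulAut.inv_def]
      exact f.symm_apply_apply _

@[simp] lemma psi_of (σ : Equiv.Perm (Fin (n + 1))) (i : Fin n) :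
    psi σ (of i) = gen (σ i.castSucc) * (gen (σ (Fin.last n)))⁻¹ :=
  phi_of σ i

lemma permToAut_of (σ : Equiv.Perm (Fin n)) (i : Fin n) :
    permToAut n σ (of i) = of (σ i) := by
  simp [permToAut, FreeGroup.freeGroupCongr]

lemma epsilonAut_mem_SP (i : Fin n) : epsilonAut i ∈ SP := by
  intro k
  refine ⟨k, ?_⟩
  by_cases hk : k = i
  · right; simp [epsilonAut, MonoidHom.toMulEquiv, hk]
  · left; simp [epsilonAut, MonoidHom.toMulEquiv, hk]

lemma permToAut_mem_SP (σ : Equiv.Perm (Fin n)) : permToAut n σ ∈ SP :=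
  fun i => ⟨σ i, Or.inl (permToAut_of σ i)⟩

lemma W_le_SP : Wsubgroup n ≤ SP := by
  rw [Wsubgroup, Subgroup.closure_le]
  rintro f (⟨i, rfl⟩ | ⟨σ, rfl⟩)
  · exact epsilonAut_mem_SP i
  · exact permToAut_mem_SP σ

lemma ne_last_of_fix (σ : Equiv.Perm (Fin (n + 1))) (h : σ (Fin.last n) = Fin.last n)
    (i : Fin n) : σ i.castSucc ≠ Fin.last n := by
  intro hc
  exact absurd (σ.injective (hc.trans h.symm)) (Fin.castSucc_lt_last i).ne

/-- Restriction of a permutation fixing the last point. -/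
def restrictPerm (σ : Equiv.Perm (Fin (n + 1))) (h : σ (Fin.last n) = Fin.last n) :
    Equiv.Perm (Fin n) where
  toFun i := (σ i.castSucc).castPred (ne_last_of_fix σ h i)
  invFun i := (σ⁻¹ i.castSucc).castPred (ne_last_of_fix σ⁻¹
    (σ.injective (by rw [Equiv.Perm.inv_def, Equiv.apply_symm_apply, h])) i)
  left_inv i := Fin.castSucc_injective _ (by
    rw [Fin.castSucc_castPred, Fin.castSucc_castPred, Equiv.Perm.inv_def, Equiv.symm_apply_apply])
  right_inv i := Fin.castSucc_injective _ (by
    rw [Fin.castSucc_castPred, Fin.castSucc_castPred, Equiv.Perm.inv_def, Equiv.apply_symm_apply])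

/-- Extension of a permutation of `Fin n` to `Fin (n+1)` fixing the last point. -/
def extendPerm (π : Equiv.Perm (Fin n)) : Equiv.Perm (Fin (n + 1)) :=
  finSuccEquivLast.symm.permCongr π.optionCongr

@[simp] lemma extendPerm_castSucc (π : Equiv.Perm (Fin n)) (i : Fin n) :
    extendPerm π i.castSucc = (π i).castSucc := by
  simp [extendPerm, Equiv.permCongr_apply]

@[simp] lemma extendPerm_last (π : Equiv.Perm (Fin n)) :
    extendPerm π (Fin.last n) = Fin.last n := by
  simp [extendPerm, Equiv.permCongr_apply]

end AuxSymmSucc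

/-- **Lemma 3.** For `n ≥ 3`, `Aut(F_n)` contains a symmetric group `Σ ≅ S_{n+1}` that
intersects `W_n` in the visible copy of `S_n`. -/
theorem aut_free_contains_symm_succ (n : ℕ) (hn : 3 ≤ n) :
    ∃ ψ : Equiv.Perm (Fin (n + 1)) →* MulAut (FreeGroup (Fin n)),
      Function.Injective ψ ∧ ψ.range ⊓ Wsubgroup n = (permToAut n).range := by
  classical
  open AuxSymmSucc FreeGroup in
  refine ⟨psi, ?_, ?_⟩
  · refine (injective_iff_map_eq_one _).2 ?_
    intro σ hσ
    have key : ∀ i : Fin n,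
        gen (σ i.castSucc) * (gen (σ (Fin.last n)))⁻¹ = FreeGroup.of i := by
      intro i
      have := congrArg (fun f : MulAut (FreeGroup (Fin n)) => f (FreeGroup.of i)) hσ
      simpa using this
    by_cases h : σ (Fin.last n) = Fin.last n
    · apply Equiv.ext
      intro j
      induction j using Fin.lastCases with
      | last => simpa using h
      | cast i =>
        have hk := key i
        rw [h, gen_last, inv_one, mul_one] at hk
        have hne := ne_last_of_fix σ h i
        rw [gen, dif_neg hne] at hk
        have h2 := FreeGroup.of_injective hk
        have h3 := congrArg Fin.castSucc h2
        rw [Fin.castSucc_castPred] at h3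
        show σ i.castSucc = i.castSucc
        exact h3
    · obtain ⟨j, hj⟩ : ∃ j : Fin n, σ (Fin.last n) = j.castSucc :=
        ⟨(σ (Fin.last n)).castPred h, (Fin.castSucc_castPred _ h).symm⟩
      have h2 : σ⁻¹ (Fin.last n) ≠ Fin.last n := by
        intro hc
        have := congrArg σ hc
        rw [Equiv.Perm.inv_def, Equiv.apply_symm_apply] at this
        exact h this.symm
      obtain ⟨i, hi⟩ : ∃ i : Fin n, σ⁻¹ (Fin.last n) = i.castSucc :=
        ⟨(σ⁻¹ (Fin.last n)).castPred h2, (Fin.castSucc_castPred _ h2).symm⟩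
      have h3 : σ i.castSucc = Fin.last n := by
        rw [← hi, Equiv.Perm.inv_def, Equiv.apply_symm_apply]
      have hk := key i
      rw [h3, gen_last, hj, gen_castSucc, one_mul] at hk
      exact absurd hk.symm (of_ne_inv_of i j)
  · ext x
    simp only [Subgroup.mem_inf, MonoidHom.mem_range]
    constructor
    · rintro ⟨⟨σ, rfl⟩, hW⟩
      have hSP := W_le_SP hW
      have hlast : σ (Fin.last n) = Fin.last n := by
        by_contra h
        obtain ⟨j, hj⟩ : ∃ j : Fin n, σ (Fin.last n) = j.castSucc :=
          ⟨(σ (Fin.last n)).castPred h, (Fin.castSucc_castPred _ h).symm⟩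
        have hex : ∃ i : Fin n, σ i.castSucc ≠ Fin.last n := by
          by_cases hc : σ (Fin.castSucc ⟨0, by omega⟩) = Fin.last n
          · refine ⟨⟨1, by omega⟩, fun hc' => ?_⟩
            have := σ.injective (hc.trans hc'.symm)
            simp [Fin.ext_iff] at this
          · exact ⟨⟨0, by omega⟩, hc⟩
        obtain ⟨i, hi⟩ := hex
        obtain ⟨k, hk⟩ : ∃ k : Fin n, σ i.castSucc = k.castSucc :=
          ⟨(σ i.castSucc).castPred hi, (Fin.castSucc_castPred _ hi).symm⟩
        have hkj : k ≠ j := by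
          rintro rfl
          have := σ.injective (hk.trans hj.symm)
          exact absurd this (Fin.castSucc_lt_last i).ne
        obtain ⟨m, hm⟩ := hSP i
        rw [psi_of, hk, hj, gen_castSucc, gen_castSucc] at hm
        rcases hm with hm | hm
        · exact (mul_inv_ne k j m hkj).1 hm
        · exact (mul_inv_ne k j m hkj).2 hm
      refine ⟨restrictPerm σ hlast, ?_⟩
      apply mulAut_ext
      intro i
      rw [permToAut_of, psi_of, hlast, gen_last, inv_one, mul_one, gen,
        dif_neg (ne_last_of_fix σ hlast i)]
      rfl
    · rintro ⟨π, rfl⟩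
      refine ⟨⟨extendPerm π, ?_⟩, Subgroup.subset_closure (Or.inr ⟨π, rfl⟩)⟩
      apply mulAut_ext
      intro i
      rw [psi_of, extendPerm_castSucc, extendPerm_last, gen_last, inv_one, mul_one,
        gen_castSucc, permToAut_of]
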